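/- Let n ≥ 1 and let (a₁,b₁,c₁), (a₂,b₂,c₂) ∈ ℝ³ with a₁²+b₁²+c₁² = 1 and a₂²+b₂²+c₂² = 1. Then there exists an invertible real 4n×4n matrix A satisfying AI = IA and A·(a₂I + b₂J + c₂K) = (a₁I + b₁J + c₁K)·A if and only if a₁ = a₂. -/

import Mathlib

noncomputable section

abbrev R4Space (n : ℕ) := (Fin n → ℝ) × (Fin n → ℝ) × (Fin n → ℝ) × (Fin n → ℝ)

/-- The standard linear complex structure `I` on `ℝ^{4n}`:
`(x₁,x₂,x₃,x₄) ↦ (−x₂, x₁, −x₄, x₃)`. -/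
def Iop (n : ℕ) : R4Space n →ₗ[ℝ] R4Space n where
  toFun x := (-x.2.1, x.1, -x.2.2.2, x.2.2.1)
  map_add' x y := by simp [Prod.ext_iff, neg_add, add_comm]
  map_smul' c x := by simp [Prod.ext_iff, smul_neg]

/-- The standard linear complex structure `J` on `ℝ^{4n}`:
`(x₁,x₂,x₃,x₄) ↦ (−x₃, x₄, x₁, −x₂)`. -/
def Jop (n : ℕ) : R4Space n →ₗ[ℝ] R4Space n where
  toFun x := (-x.2.2.1, x.2.2.2, x.1, -x.2.1)
  map_add' x y := by simp [Prod.ext_iff, neg_add, add_comm]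
  map_smul' c x := by simp [Prod.ext_iff, smul_neg]

/-- The standard linear complex structure `K` on `ℝ^{4n}`:
`(x₁,x₂,x₃,x₄) ↦ (−x₄, −x₃, x₂, x₁)`. -/
def Kop (n : ℕ) : R4Space n →ₗ[ℝ] R4Space n where
  toFun x := (-x.2.2.2, -x.2.2.1, x.2.1, x.1)
  map_add' x y := by simp [Prod.ext_iff, neg_add, add_comm]
  map_smul' c x := by simp [Prod.ext_iff, smul_neg]

@[simp] lemma Iop_apply (n : ℕ) (x : R4Space n) :
    Iop n x = (-x.2.1, x.1, -x.2.2.2, x.2.2.1) := rfl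

@[simp] lemma Jop_apply (n : ℕ) (x : R4Space n) :
    Jop n x = (-x.2.2.1, x.2.2.2, x.1, -x.2.1) := rfl

@[simp] lemma Kop_apply (n : ℕ) (x : R4Space n) :
    Kop n x = (-x.2.2.2, -x.2.2.1, x.2.1, x.1) := rfl

lemma anticomm (n : ℕ) (a b c : ℝ) (x : R4Space n) :
    Iop n ((a • Iop n + b • Jop n + c • Kop n) x)
      + (a • Iop n + b • Jop n + c • Kop n) (Iop n x) = (-(2*a)) • x := by
  simp only [LinearMap.add_apply, LinearMap.smul_apply, Iop_apply, Jop_apply, Kop_apply,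
    Prod.smul_mk, Prod.mk_add_mk, Prod.fst_add, Prod.snd_add, Prod.smul_fst, Prod.smul_snd]
  refine Prod.ext ?_ (Prod.ext ?_ (Prod.ext ?_ ?_)) <;> funext i <;>
    simp [Pi.add_apply, Pi.smul_apply, Pi.neg_apply, smul_eq_mul] <;> ring

set_option maxHeartbeats 1000000 in
/-- For unit vectors `(a₁,b₁,c₁)`, `(a₂,b₂,c₂)` in `ℝ³`, the induced complex
structures `a₁I+b₁J+c₁K` and `a₂I+b₂J+c₂K` on `ℝ^{4n}` are conjugate by an invertible real-linear
map commuting with `I` (i.e. by an element of `GL(2n,ℂ)`) if and only if `a₁ = a₂`. -/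
theorem conjugate_by_complex_linear_iff
    (n : ℕ) (hn : 1 ≤ n) (a₁ b₁ c₁ a₂ b₂ c₂ : ℝ)
    (h₁ : a₁ ^ 2 + b₁ ^ 2 + c₁ ^ 2 = 1) (h₂ : a₂ ^ 2 + b₂ ^ 2 + c₂ ^ 2 = 1) :
    (∃ A : R4Space n ≃ₗ[ℝ] R4Space n,
        A.toLinearMap ∘ₗ Iop n = Iop n ∘ₗ A.toLinearMap ∧
        A.toLinearMap ∘ₗ (a₂ • Iop n + b₂ • Jop n + c₂ • Kop n)
          = (a₁ • Iop n + b₁ • Jop n + c₁ • Kop n) ∘ₗ A.toLinearMap) ↔ a₁ = a₂ := by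
  constructor
  · rintro ⟨A, hAI, hAQ⟩
    set Q₁ := a₁ • Iop n + b₁ • Jop n + c₁ • Kop n with hQ1
    set Q₂ := a₂ • Iop n + b₂ • Jop n + c₂ • Kop n with hQ2
    have hI : ∀ v, A (Iop n v) = Iop n (A v) := fun v => by
      simpa using LinearMap.congr_fun hAI v
    have hQ : ∀ v, A (Q₂ v) = Q₁ (A v) := fun v => by
      simpa using LinearMap.congr_fun hAQ v
    set x₀ : R4Space n := (fun _ => (1:ℝ), 0, 0, 0) with hx₀
    have hx0 : (x₀ : R4Space n) ≠ 0 := by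
      intro h
      have := congrFun (congrArg Prod.fst h) ⟨0, hn⟩
      simpa [hx₀] using this
    have hAx : A x₀ ≠ 0 := by
      intro h
      exact hx0 (by simpa using (LinearEquiv.map_eq_zero_iff A).mp h)
    have key : (-(2*a₂)) • (A x₀) = (-(2*a₁)) • (A x₀) := by
      calc (-(2*a₂)) • (A x₀) = A ((-(2*a₂)) • x₀) := (map_smul A _ _).symm
        _ = A (Iop n (Q₂ x₀) + Q₂ (Iop n x₀)) := by rw [anticomm]
        _ = A (Iop n (Q₂ x₀)) + A (Q₂ (Iop n x₀)) := map_add A _ _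
        _ = Iop n (Q₁ (A x₀)) + Q₁ (Iop n (A x₀)) := by rw [hI, hQ, hQ, hI]
        _ = (-(2*a₁)) • (A x₀) := anticomm n a₁ b₁ c₁ (A x₀)
    have hsub : ((-(2*a₂)) - (-(2*a₁))) • (A x₀) = 0 := by
      rw [sub_smul, key, sub_self]
    rcases smul_eq_zero.mp hsub with h | h
    · linarith
    · exact absurd h hAx
  · rintro rfl
    have hr : b₁^2 + c₁^2 = b₂^2 + c₂^2 := by linarith
    obtain ⟨p, q, hpq, e1, e2⟩ :
        ∃ p q : ℝ, p^2 + q^2 = 1 ∧ p*b₂ - q*c₂ = p*b₁ + q*c₁ ∧ p*c₂ + q*b₂ = p*c₁ - q*b₁ := by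
      by_cases hz : b₂^2 + c₂^2 = 0
      · have hb2 : b₂ = 0 := by nlinarith
        have hc2 : c₂ = 0 := by nlinarith
        have hb1 : b₁ = 0 := by nlinarith
        have hc1 : c₁ = 0 := by nlinarith
        exact ⟨1, 0, by norm_num, by simp [hb1, hb2, hc1, hc2], by simp [hb1, hb2, hc1, hc2]⟩
      · have hzpos : 0 < b₂^2 + c₂^2 := lt_of_le_of_ne (by positivity) (Ne.symm hz)
        set z₁ : ℂ := ⟨b₁, c₁⟩ with hz1
        set z₂ : ℂ := ⟨b₂, c₂⟩ with hz2
        obtain ⟨w, hw⟩ := IsAlgClosed.exists_pow_nat_eq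
          (z₁ * (starRingEnd ℂ) z₂ / ((b₂^2+c₂^2 : ℝ) : ℂ)) zero_lt_two
        have hrne : ((b₂^2+c₂^2 : ℝ) : ℂ) ≠ 0 := Complex.ofReal_ne_zero.mpr hz
        have hns1 : Complex.normSq z₁ = b₁^2 + c₁^2 := by
          simp [hz1, Complex.normSq_mk]; ring
        have hns2 : Complex.normSq z₂ = b₂^2 + c₂^2 := by
          simp [hz2, Complex.normSq_mk]; ring
        have hz2sq : (starRingEnd ℂ) z₂ * z₂ = ((b₂^2+c₂^2 : ℝ) : ℂ) := by
          rw [← Complex.normSq_eq_conj_mul_self, hns2]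
        have hw2z : w^2 * z₂ = z₁ := by
          rw [hw, div_mul_eq_mul_div, mul_assoc, hz2sq, mul_div_assoc, div_self hrne, mul_one]
        have hnsw := congrArg Complex.normSq hw2z
        rw [map_mul, map_pow, hns1, hns2] at hnsw
        have h3 : (Complex.normSq w)^2 = 1 := by
          apply mul_right_cancel₀ hz
          rw [hnsw, one_mul, hr]
        have h4 : (Complex.normSq w - 1) * (Complex.normSq w + 1) = 0 := by
          linear_combination h3
        have hnw : Complex.normSq w = 1 := by
          rcases mul_eq_zero.mp h4 with h | h
          · linarith
          · linarith [Complex.normSq_nonneg w]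
        have hws : w * z₂ = z₁ * (starRingEnd ℂ) w := by
          have hcw : (starRingEnd ℂ) w * w = 1 := by
            rw [← Complex.normSq_eq_conj_mul_self, hnw]; norm_num
          calc w * z₂ = ((starRingEnd ℂ) w * w) * (w * z₂) := by rw [hcw]; ring
            _ = (w^2 * z₂) * (starRingEnd ℂ) w := by ring
            _ = z₁ * (starRingEnd ℂ) w := by rw [hw2z]
        refine ⟨w.re, w.im, ?_, ?_, ?_⟩
        · rw [Complex.normSq_apply] at hnw; nlinarith [hnw]
        · have h := congrArg Complex.re hws
          simp [Complex.mul_re, hz1, hz2, Complex.conj_re, Complex.conj_im] at h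
          linarith [h]
        · have h := congrArg Complex.im hws
          simp [Complex.mul_im, hz1, hz2, Complex.conj_re, Complex.conj_im] at h
          linarith [h]
    set f : R4Space n →ₗ[ℝ] R4Space n := p • LinearMap.id + q • Iop n with hf
    set g : R4Space n →ₗ[ℝ] R4Space n := p • LinearMap.id - q • Iop n with hg
    have hfg : f ∘ₗ g = LinearMap.id := by
      apply LinearMap.ext; intro x
      simp only [hf, hg, LinearMap.comp_apply, LinearMap.add_apply, LinearMap.sub_apply,
        LinearMap.smul_apply, LinearMap.id_apply, Iop_apply]
      refine Prod.ext ?_ (Prod.ext ?_ (Prod.ext ?_ ?_))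
      · funext i; simp only [Prod.fst_add, Prod.snd_add, Prod.fst_sub, Prod.snd_sub, Prod.smul_fst, Prod.smul_snd, Pi.add_apply, Pi.sub_apply, Pi.smul_apply, Pi.neg_apply, smul_eq_mul]; linear_combination (x.1 i) * hpq
      · funext i; simp only [Prod.fst_add, Prod.snd_add, Prod.fst_sub, Prod.snd_sub, Prod.smul_fst, Prod.smul_snd, Pi.add_apply, Pi.sub_apply, Pi.smul_apply, Pi.neg_apply, smul_eq_mul]; linear_combination (x.2.1 i) * hpq
      · funext i; simp only [Prod.fst_add, Prod.snd_add, Prod.fst_sub, Prod.snd_sub, Prod.smul_fst, Prod.smul_snd, Pi.add_apply, Pi.sub_apply, Pi.smul_apply, Pi.neg_apply, smul_eq_mul]; linear_combination (x.2.2.1 i) * hpq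
      · funext i; simp only [Prod.fst_add, Prod.snd_add, Prod.fst_sub, Prod.snd_sub, Prod.smul_fst, Prod.smul_snd, Pi.add_apply, Pi.sub_apply, Pi.smul_apply, Pi.neg_apply, smul_eq_mul]; linear_combination (x.2.2.2 i) * hpq
    have hgf : g ∘ₗ f = LinearMap.id := by
      apply LinearMap.ext; intro x
      simp only [hf, hg, LinearMap.comp_apply, LinearMap.add_apply, LinearMap.sub_apply,
        LinearMap.smul_apply, LinearMap.id_apply, Iop_apply]
      refine Prod.ext ?_ (Prod.ext ?_ (Prod.ext ?_ ?_))
      · funext i; simp only [Prod.fst_add, Prod.snd_add, Prod.fst_sub, Prod.snd_sub, Prod.smul_fst, Prod.smul_snd, Pi.add_apply, Pi.sub_apply, Pi.smul_apply, Pi.neg_apply, smul_eq_mul]; linear_combination (x.1 i) * hpq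
      · funext i; simp only [Prod.fst_add, Prod.snd_add, Prod.fst_sub, Prod.snd_sub, Prod.smul_fst, Prod.smul_snd, Pi.add_apply, Pi.sub_apply, Pi.smul_apply, Pi.neg_apply, smul_eq_mul]; linear_combination (x.2.1 i) * hpq
      · funext i; simp only [Prod.fst_add, Prod.snd_add, Prod.fst_sub, Prod.snd_sub, Prod.smul_fst, Prod.smul_snd, Pi.add_apply, Pi.sub_apply, Pi.smul_apply, Pi.neg_apply, smul_eq_mul]; linear_combination (x.2.2.1 i) * hpq
      · funext i; simp only [Prod.fst_add, Prod.snd_add, Prod.fst_sub, Prod.snd_sub, Prod.smul_fst, Prod.smul_snd, Pi.add_apply, Pi.sub_apply, Pi.smul_apply, Pi.neg_apply, smul_eq_mul]; linear_combination (x.2.2.2 i) * hpq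
    have hIcomm : f ∘ₗ Iop n = Iop n ∘ₗ f := by
      apply LinearMap.ext; intro x
      simp only [hf, LinearMap.comp_apply, LinearMap.add_apply, LinearMap.smul_apply,
        LinearMap.id_apply, Iop_apply]
      refine Prod.ext ?_ (Prod.ext ?_ (Prod.ext ?_ ?_)) <;> funext i <;>
        simp only [Prod.fst_add, Prod.snd_add, Prod.fst_sub, Prod.snd_sub, Prod.smul_fst, Prod.smul_snd, Pi.add_apply, Pi.sub_apply, Pi.smul_apply, Pi.neg_apply, smul_eq_mul] <;> ring
    have hQcomm : f ∘ₗ (a₁ • Iop n + b₂ • Jop n + c₂ • Kop n)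
        = (a₁ • Iop n + b₁ • Jop n + c₁ • Kop n) ∘ₗ f := by
      apply LinearMap.ext; intro x
      simp only [hf, LinearMap.comp_apply, LinearMap.add_apply, LinearMap.smul_apply,
        LinearMap.id_apply, Iop_apply, Jop_apply, Kop_apply]
      refine Prod.ext ?_ (Prod.ext ?_ (Prod.ext ?_ ?_)) <;> funext i <;>
        simp only [Prod.fst_add, Prod.snd_add, Prod.fst_sub, Prod.snd_sub, Prod.smul_fst, Prod.smul_snd, Pi.add_apply, Pi.sub_apply, Pi.smul_apply, Pi.neg_apply, smul_eq_mul]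
      · linear_combination (-(x.2.2.1 i)) * e1 + (-(x.2.2.2 i)) * e2
      · linear_combination (x.2.2.2 i) * e1 + (-(x.2.2.1 i)) * e2
      · linear_combination (x.1 i) * e1 + (x.2.1 i) * e2
      · linear_combination (-(x.2.1 i)) * e1 + (x.1 i) * e2
    exact ⟨LinearEquiv.ofLinear f g hfg hgf,
      by rw [LinearEquiv.ofLinear_toLinearMap]; exact hIcomm,
      by rw [LinearEquiv.ofLinear_toLinearMap]; exact hQcomm⟩
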